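/- Suppose H : (0,∞) → ℝ is bounded on every compact subset of (0,∞) and satisfies Assumption (DE) with parameter ρ ∈ [0,∞). Then lim_{t→∞} H(t)/(t log t) = ρ; in particular, for every δ > 0 one has H(t) ≤ (ρ + δ) t log t for all sufficiently large t. -/

import Mathlib

open Filter

set_option maxHeartbeats 1000000

/-- If `H` is bounded on compact subsets of `(0,∞)` and satisfies Assumption (DE) with
parameter `ρ ∈ [0,∞)`, then `H(t)/(t log t) → ρ`; in particular, for every `δ > 0`,
`H(t) ≤ (ρ + δ) t log t` for all sufficiently large `t`. -/
theorem DE_t_log_t_asymptotics (H : ℝ → ℝ) (ρ : ℝ) (hρ : 0 ≤ ρ)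
    (hbdd : ∀ K : Set ℝ, K ⊆ Set.Ioi 0 → IsCompact K → ∃ C : ℝ, ∀ t ∈ K, |H t| ≤ C)
    (hDE : ∀ c ∈ Set.Ioo (0 : ℝ) 1,
      Tendsto (fun t => (H (c * t) - c * H t) / t) atTop (nhds (ρ * c * Real.log c))) :
    Tendsto (fun t => H t / (t * Real.log t)) atTop (nhds ρ) ∧
      ∀ δ > (0 : ℝ), ∀ᶠ t in atTop, H t ≤ (ρ + δ) * (t * Real.log t) := by
  have hlog2 : (0:ℝ) < Real.log 2 := Real.log_pos one_lt_two
  have hlog2le : Real.log 2 ≤ 1 := by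
    nlinarith [Real.log_le_sub_one_of_pos (show (0:ℝ) < 2 by norm_num)]
  have hlog2half : (1:ℝ)/2 ≤ Real.log 2 := by nlinarith [Real.log_two_gt_d9]
  -- the ψ limit
  have hψ : Tendsto (fun u : ℝ => H (2*u)/(2*u) - H u / u) atTop (nhds (ρ * Real.log 2)) := by
    have hhalf := hDE (1/2) (by norm_num)
    have h2u : Tendsto (fun u : ℝ => 2*u) atTop atTop :=
      tendsto_id.const_mul_atTop two_pos
    have hc := ((hhalf.comp h2u).const_mul (-2 : ℝ))
    have heq : ∀ᶠ u in atTop, (-2 : ℝ) * ((fun t => (H ((1/2)*t) - (1/2)*H t)/t) ((2:ℝ)*u))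
        = H (2*u)/(2*u) - H u / u := by
      filter_upwards [eventually_gt_atTop (0:ℝ)] with u hu
      have h12 : (1/2 : ℝ) * (2*u) = u := by ring
      simp only [h12]
      have hu0 : u ≠ 0 := ne_of_gt hu
      field_simp
      ring
    have hval : (-2 : ℝ) * (ρ * (1/2) * Real.log (1/2)) = ρ * Real.log 2 := by
      rw [show (1/2:ℝ) = 2⁻¹ by norm_num, Real.log_inv]; ring
    rw [hval] at hc
    exact hc.congr' heq
  have main : Tendsto (fun t => H t / (t * Real.log t)) atTop (nhds ρ) := by
    rw [Metric.tendsto_atTop]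
    intro ε hε
    set ε' := ε/4 with hε'def
    have hε' : 0 < ε' := by positivity
    obtain ⟨U, hU⟩ := Metric.tendsto_atTop.mp hψ ε' hε'
    obtain ⟨K, hK⟩ := pow_unbounded_of_one_lt (max U 1) (one_lt_two (α := ℝ))
    have h2K1 : U ≤ (2:ℝ)^K := le_trans (le_max_left _ _) hK.le
    obtain ⟨C, hC⟩ := hbdd (Set.Icc 1 ((2:ℝ)^(K+1)))
      (fun x hx => lt_of_lt_of_le one_pos hx.1) isCompact_Icc
    have h1le : (1:ℝ) ≤ 2^(K+1) := one_le_pow₀ one_le_two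
    have h2le : (2:ℝ) ≤ 2^(K+1) := by
      calc (2:ℝ) = 2^1 := (pow_one 2).symm
      _ ≤ 2^(K+1) := pow_le_pow_right₀ one_le_two (Nat.le_add_left 1 K)
    have hC0 : 0 ≤ C := le_trans (abs_nonneg _) (hC 1 ⟨le_refl 1, h1le⟩)
    have hHv : ∀ v : ℝ, 1 ≤ v → v ≤ 2^(K+1) → |H v / v| ≤ C := by
      intro v hv1 hv2
      have hv0 : 0 < v := lt_of_lt_of_le one_pos hv1
      rw [abs_div, abs_of_pos hv0]
      exact le_trans (div_le_self (abs_nonneg _) hv1) (hC v ⟨hv1, hv2⟩)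
    set D := 2*C + 2*(ρ*Real.log 2) with hD
    have hD0 : 0 ≤ D := by positivity
    set B := C + ρ + K*D with hB
    have hB0 : 0 ≤ B := by positivity
    refine ⟨max ((2:ℝ)^K) (Real.exp (max (B/ε') 1)), fun t ht => ?_⟩
    have ht2K : (2:ℝ)^K ≤ t := le_trans (le_max_left _ _) ht
    have hte : Real.exp (max (B/ε') 1) ≤ t := le_trans (le_max_right _ _) ht
    have ht1 : (1:ℝ) ≤ t := le_trans (one_le_pow₀ one_le_two) ht2K
    have ht0 : (0:ℝ) < t := lt_of_lt_of_le one_pos ht1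
    have hlogt : max (B/ε') 1 ≤ Real.log t := (Real.le_log_iff_exp_le ht0).mpr hte
    have hlogt1 : 1 ≤ Real.log t := le_trans (le_max_right _ _) hlogt
    have hlogt0 : 0 < Real.log t := lt_of_lt_of_le one_pos hlogt1
    have hBlog : B ≤ ε' * Real.log t := by
      have h1 : B/ε' ≤ Real.log t := le_trans (le_max_left _ _) hlogt
      calc B = ε' * (B/ε') := by field_simp
      _ ≤ ε' * Real.log t := by nlinarith
    set n := ⌊Real.logb 2 t⌋₊ with hn
    set s := t / 2^n with hsdef
    have hlogbnn : 0 ≤ Real.logb 2 t := Real.logb_nonneg one_lt_two ht1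
    have h2n : (2:ℝ)^n ≤ t := by
      have hlb : (n:ℝ) ≤ Real.logb 2 t := Nat.floor_le hlogbnn
      calc (2:ℝ)^n = (2:ℝ)^(n:ℝ) := (Real.rpow_natCast 2 n).symm
      _ ≤ (2:ℝ)^(Real.logb 2 t) := Real.rpow_le_rpow_of_exponent_le one_le_two hlb
      _ = t := Real.rpow_logb two_pos (by norm_num) ht0
    have h2n1 : t < 2^(n+1) := by
      have hub : Real.logb 2 t < (n:ℝ) + 1 := Nat.lt_floor_add_one _
      calc t = (2:ℝ)^(Real.logb 2 t) := (Real.rpow_logb two_pos (by norm_num) ht0).symm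
      _ < (2:ℝ)^((n:ℝ)+1) := Real.rpow_lt_rpow_of_exponent_lt one_lt_two hub
      _ = 2^(n+1) := by
          rw [show ((n:ℝ)+1) = ((n+1:ℕ):ℝ) by push_cast; ring, Real.rpow_natCast]
    have h2npos : (0:ℝ) < 2^n := by positivity
    have hs1 : 1 ≤ s := (one_le_div h2npos).mpr h2n
    have hs2 : s < 2 := by
      rw [hsdef, div_lt_iff₀ h2npos]
      calc t < 2^(n+1) := h2n1
      _ = 2 * 2^n := by ring
    have hts : t = 2^n * s := by rw [hsdef]; field_simp
    have hs0 : (0:ℝ) < s := lt_of_lt_of_le one_pos hs1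
    have hKn : K ≤ n := by
      rw [hn]
      apply Nat.le_floor
      calc (K:ℝ) = Real.logb 2 ((2:ℝ)^K) := by
            rw [Real.logb_pow, Real.logb_self_eq_one one_lt_two]; ring
      _ ≤ Real.logb 2 t := Real.logb_le_logb_of_le one_lt_two (by positivity) ht2K
    have hlogts : Real.log t = n * Real.log 2 + Real.log s := by
      rw [hts, Real.log_mul (by positivity) (ne_of_gt hs0), Real.log_pow]
    set g : ℕ → ℝ := fun k => H (2*((2:ℝ)^k*s))/(2*((2:ℝ)^k*s)) - H ((2:ℝ)^k*s)/((2:ℝ)^k*s)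
      with hgdef
    -- telescoping
    have tele : ∑ k ∈ Finset.range n, g k = H t / t - H s / s := by
      have h := Finset.sum_range_sub (fun k => H ((2:ℝ)^k * s) / ((2:ℝ)^k * s)) n
      simp only [pow_zero, one_mul] at h
      rw [hts, ← h]
      apply Finset.sum_congr rfl
      intro k _
      have hk : (2:ℝ)^(k+1) * s = 2 * ((2:ℝ)^k * s) := by ring
      simp only [hgdef, hk]
    have expand : H t / t - ρ * Real.log t
        = (H s / s - ρ * Real.log s) + ∑ k ∈ Finset.range n, (g k - ρ * Real.log 2) := by
      rw [Finset.sum_sub_distrib, tele, Finset.sum_const, Finset.card_range, nsmul_eq_mul,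
        hlogts]
      ring
    have hsC : |H s / s - ρ * Real.log s| ≤ C + ρ := by
      have h1 : |H s / s| ≤ C := hHv s hs1 (le_trans hs2.le h2le)
      have h2 : 0 ≤ Real.log s := Real.log_nonneg hs1
      have h3 : Real.log s ≤ 1 := le_trans (Real.log_le_log hs0 hs2.le) hlog2le
      have h4 : |ρ * Real.log s| ≤ ρ := by
        rw [abs_of_nonneg (by positivity)]; nlinarith
      calc |H s / s - ρ * Real.log s| ≤ |H s / s| + |ρ * Real.log s| := abs_sub _ _
      _ ≤ C + ρ := add_le_add h1 h4
    have hsplit : ∑ k ∈ Finset.range n, (g k - ρ * Real.log 2)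
        = (∑ k ∈ Finset.Ico 0 K, (g k - ρ * Real.log 2))
          + ∑ k ∈ Finset.Ico K n, (g k - ρ * Real.log 2) := by
      rw [Finset.range_eq_Ico, ← Finset.sum_Ico_consecutive _ (Nat.zero_le K) hKn]
    have hbad : |∑ k ∈ Finset.Ico 0 K, (g k - ρ * Real.log 2)| ≤ K * D := by
      refine le_trans (Finset.abs_sum_le_sum_abs _ _) ?_
      have hterm : ∀ k ∈ Finset.Ico 0 K, |g k - ρ * Real.log 2| ≤ D := by
        intro k hk
        have hkK : k < K := (Finset.mem_Ico.mp hk).2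
        have hpk : (0:ℝ) < 2^k := by positivity
        have h1k : (1:ℝ) ≤ 2^k := one_le_pow₀ one_le_two
        have hu1 : 1 ≤ (2:ℝ)^k * s := le_trans h1k (le_mul_of_one_le_right hpk.le hs1)
        have huK : (2:ℝ)^k * s ≤ 2^(K+1) := by
          calc (2:ℝ)^k * s ≤ 2^k * 2 := mul_le_mul_of_nonneg_left hs2.le hpk.le
          _ = 2^(k+1) := by ring
          _ ≤ 2^(K+1) := pow_le_pow_right₀ one_le_two (by omega)
        have h2u1 : 1 ≤ 2*((2:ℝ)^k*s) := by linarith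
        have h2uK : 2*((2:ℝ)^k*s) ≤ 2^(K+1) := by
          calc 2*((2:ℝ)^k*s) ≤ 2*(2^k*2) :=
              mul_le_mul_of_nonneg_left (mul_le_mul_of_nonneg_left hs2.le hpk.le) two_pos.le
          _ = 2^(k+2) := by ring
          _ ≤ 2^(K+1) := pow_le_pow_right₀ one_le_two (by omega)
        have hb1 := hHv (2*((2:ℝ)^k*s)) h2u1 h2uK
        have hb2 := hHv ((2:ℝ)^k*s) hu1 huK
        have hρ2 : (0:ℝ) ≤ ρ * Real.log 2 := by positivity
        calc |g k - ρ * Real.log 2| ≤ |g k| + |ρ * Real.log 2| := abs_sub _ _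
        _ ≤ (|H (2*((2:ℝ)^k*s))/(2*((2:ℝ)^k*s))| + |H ((2:ℝ)^k*s)/((2:ℝ)^k*s)|)
              + |ρ * Real.log 2| := by
            refine add_le_add_left ?_ _
            simp only [hgdef]
            exact abs_sub _ _
        _ ≤ (C + C) + ρ * Real.log 2 :=
            add_le_add (add_le_add hb1 hb2) (le_of_eq (abs_of_nonneg hρ2))
        _ ≤ D := by rw [hD]; linarith
      refine le_trans (Finset.sum_le_card_nsmul _ _ D hterm) ?_
      rw [Nat.card_Ico, Nat.sub_zero, nsmul_eq_mul]
    have hgood : |∑ k ∈ Finset.Ico K n, (g k - ρ * Real.log 2)| ≤ n * ε' := by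
      refine le_trans (Finset.abs_sum_le_sum_abs _ _) ?_
      have hterm : ∀ k ∈ Finset.Ico K n, |g k - ρ * Real.log 2| ≤ ε' := by
        intro k hk
        have hKk : K ≤ k := (Finset.mem_Ico.mp hk).1
        have hku : U ≤ (2:ℝ)^k * s := by
          calc U ≤ (2:ℝ)^K := h2K1
          _ ≤ (2:ℝ)^k := pow_le_pow_right₀ one_le_two hKk
          _ ≤ (2:ℝ)^k * s := le_mul_of_one_le_right (by positivity) hs1
        have h := hU ((2:ℝ)^k * s) hku
        rw [Real.dist_eq] at h
        simp only [hgdef]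
        exact h.le
      refine le_trans (Finset.sum_le_card_nsmul _ _ ε' hterm) ?_
      rw [Nat.card_Ico, nsmul_eq_mul]
      have hcast : ((n - K : ℕ) : ℝ) ≤ (n : ℝ) := by exact_mod_cast Nat.sub_le n K
      nlinarith
    have key : |H t / t - ρ * Real.log t| ≤ B + n * ε' := by
      rw [expand, hsplit]
      calc |(H s / s - ρ * Real.log s)
              + ((∑ k ∈ Finset.Ico 0 K, (g k - ρ * Real.log 2))
                + ∑ k ∈ Finset.Ico K n, (g k - ρ * Real.log 2))|
          ≤ |H s / s - ρ * Real.log s|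
              + (|∑ k ∈ Finset.Ico 0 K, (g k - ρ * Real.log 2)|
                + |∑ k ∈ Finset.Ico K n, (g k - ρ * Real.log 2)|) :=
            le_trans (abs_add_le _ _) (add_le_add_right (abs_add_le _ _) _)
      _ ≤ (C + ρ) + (K * D + n * ε') := add_le_add hsC (add_le_add hbad hgood)
      _ = B + n * ε' := by rw [hB]; ring
    have hnlog : (n:ℝ) * Real.log 2 ≤ Real.log t := by
      rw [hlogts]; nlinarith [Real.log_nonneg hs1]
    have hn2 : (n:ℝ) ≤ 2 * Real.log t := by nlinarith [Nat.cast_nonneg (α := ℝ) n]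
    have final : |H t / (t * Real.log t) - ρ| ≤ 3 * ε' := by
      have heq : H t / (t * Real.log t) - ρ = (H t / t - ρ * Real.log t) / Real.log t := by
        field_simp
      rw [heq, abs_div, abs_of_pos hlogt0, div_le_iff₀ hlogt0]
      calc |H t / t - ρ * Real.log t| ≤ B + n * ε' := key
      _ ≤ ε' * Real.log t + (2 * Real.log t) * ε' := by
          refine add_le_add hBlog ?_
          nlinarith
      _ = 3 * ε' * Real.log t := by ring
    rw [Real.dist_eq]
    calc |H t / (t * Real.log t) - ρ| ≤ 3 * ε' := final
    _ < ε := by rw [hε'def]; linarith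
  refine ⟨main, fun δ hδ => ?_⟩
  obtain ⟨N, hN⟩ := Metric.tendsto_atTop.mp main δ hδ
  filter_upwards [eventually_ge_atTop N, eventually_ge_atTop (Real.exp 1)] with t htN hte
  have ht0 : (0:ℝ) < t := lt_of_lt_of_le (Real.exp_pos 1) hte
  have ht1 : (1:ℝ) < t := lt_of_lt_of_le (by nlinarith [Real.exp_one_gt_d9]) hte
  have hlt : 0 < Real.log t := Real.log_pos ht1
  have hpos : (0:ℝ) < t * Real.log t := mul_pos ht0 hlt
  have hd := hN t htN
  rw [Real.dist_eq] at hd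
  have hle : H t / (t * Real.log t) ≤ ρ + δ := by
    have := abs_lt.mp hd; linarith [this.2]
  calc H t = (H t / (t * Real.log t)) * (t * Real.log t) := by field_simp
  _ ≤ (ρ + δ) * (t * Real.log t) := mul_le_mul_of_nonneg_right hle hpos.le
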